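/- arXiv:0907.2836 — 4 statements merged into one kernel-verified Lean document; each statement's English description precedes it below -/
import Mathlib

section
/- If p(z) is a complex polynomial of degree n, then max_{|z|=1} |p'(z)| ≤ n · max_{|z|=1} |p(z)|. -/
open Polynomial Finset

noncomputable def maxMod (p : Polynomial ℂ) (c : ℝ) : ℝ :=
  sSup ((fun z => ‖p.eval z‖) '' {z : ℂ | ‖z‖ = c})

noncomputable def minMod (p : Polynomial ℂ) (c : ℝ) : ℝ :=
  sInf ((fun z => ‖p.eval z‖) '' {z : ℂ | ‖z‖ = c})

noncomputable def polarDeriv (p : Polynomial ℂ) (α : ℂ) : Polynomial ℂ :=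
  C (p.natDegree : ℂ) * p + (C α - X) * derivative p

lemma circle_eq : {z : ℂ | ‖z‖ = 1} = Metric.sphere (0:ℂ) 1 := by
  ext z; simp [Complex.dist_eq]

lemma maxMod_ge (p : Polynomial ℂ) {z : ℂ} (hz : ‖z‖ = 1) :
    ‖p.eval z‖ ≤ maxMod p 1 := by
  apply le_csSup
  · rw [circle_eq]
    exact ((isCompact_sphere 0 1).image
      (continuous_norm.comp (p.continuous_aeval))).bddAbove
  · exact ⟨z, hz, rfl⟩

lemma maxMod_le (p : Polynomial ℂ) {C : ℝ}
    (h : ∀ z : ℂ, ‖z‖ = 1 → ‖p.eval z‖ ≤ C) : maxMod p 1 ≤ C := by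
  apply csSup_le
  · exact ⟨_, ⟨1, by simp, rfl⟩⟩
  · rintro x ⟨z, hz, rfl⟩; exact h z hz

noncomputable def rev (p : Polynomial ℂ) : Polynomial ℂ :=
  ∑ k ∈ range (p.natDegree + 1), C (p.coeff (p.natDegree - k)) * X ^ k

lemma rev_eval (p : Polynomial ℂ) {z : ℂ} (hz : z ≠ 0) :
    p.eval z = z ^ p.natDegree * (rev p).eval z⁻¹ := by
  rw [rev, eval_finset_sum, Finset.mul_sum, eval_eq_sum_range]
  rw [← Finset.sum_range_reflect]
  apply Finset.sum_congr rfl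
  intro k hk
  simp only [Finset.mem_range, Nat.lt_succ_iff] at hk
  simp only [eval_mul, eval_C, eval_pow, eval_X, Nat.add_sub_cancel]
  rw [inv_pow, pow_sub₀ z hz hk]
  ring


lemma rev_eval_zero' (p : Polynomial ℂ) : (rev p).eval 0 = p.leadingCoeff := by
  rw [rev, eval_finset_sum, Finset.sum_eq_single 0]
  · simp only [Nat.sub_zero, eval_mul, eval_C, eval_pow, eval_X, pow_zero, mul_one, leadingCoeff]
  · intro k _ hk; simp [eval_pow, zero_pow hk]
  · simp

lemma rev_bound (p : Polynomial ℂ) (hs : ∀ u : ℂ, ‖u‖ = 1 → ‖(rev p).eval u‖ ≤ maxMod p 1)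
    {v : ℂ} (hv : ‖v‖ ≤ 1) : ‖(rev p).eval v‖ ≤ maxMod p 1 := by
  have := Complex.norm_le_of_forall_mem_frontier_norm_le (U := Metric.ball (0:ℂ) 1)
    Metric.isBounded_ball ((rev p).differentiable.diffContOnCl)
    (C := maxMod p 1) ?_ (z := v) ?_
  · exact this
  · intro z hz
    rw [frontier_ball 0 one_ne_zero] at hz
    exact hs z (by simpa [Complex.dist_eq] using hz)
  · rw [closure_ball 0 one_ne_zero]
    simpa [Complex.dist_eq] using hv

lemma rev_circ (p : Polynomial ℂ) {u : ℂ} (hu : ‖u‖ = 1) :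
    ‖(rev p).eval u‖ ≤ maxMod p 1 := by
  have hu0 : u ≠ 0 := by intro h; simp [h] at hu
  have hui : ‖u⁻¹‖ = 1 := by rw [norm_inv, hu]; norm_num
  have := rev_eval p (z := u⁻¹) (inv_ne_zero hu0)
  rw [inv_inv] at this
  have habs : ‖p.eval u⁻¹‖ =
      ‖u⁻¹‖ ^ p.natDegree * ‖(rev p).eval u‖ := by
    rw [this, norm_mul, norm_pow]
  rw [hui, one_pow, one_mul] at habs
  rw [← habs]
  exact maxMod_ge p hui

lemma rev_disk (p : Polynomial ℂ) {v : ℂ} (hv : ‖v‖ ≤ 1) :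
    ‖(rev p).eval v‖ ≤ maxMod p 1 :=
  rev_bound p (fun u hu => rev_circ p hu) hv

lemma growth (p : Polynomial ℂ) {w : ℂ} (hw : 1 ≤ ‖w‖) :
    ‖p.eval w‖ ≤ maxMod p 1 * ‖w‖ ^ p.natDegree := by
  have hw0 : w ≠ 0 := by intro h; simp [h] at hw; linarith
  have hwi : ‖w⁻¹‖ ≤ 1 := by
    rw [norm_inv]; exact inv_le_one_of_one_le₀ hw
  rw [rev_eval p hw0, norm_mul, norm_pow, mul_comm]
  gcongr
  exact rev_disk p hwi

lemma lead_bound (p : Polynomial ℂ) : ‖p.leadingCoeff‖ ≤ maxMod p 1 := by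
  rw [← rev_eval_zero']
  exact rev_disk p (by simp)

lemma deriv_prod_eval (z : ℂ) (s : Multiset ℂ) (h : ∀ r ∈ s, z - r ≠ 0) :
    eval z (derivative (s.map (fun a => X - C a)).prod) =
      eval z ((s.map (fun a => X - C a)).prod) * (s.map (fun a => (z - a)⁻¹)).sum := by
  induction s using Multiset.induction with
  | empty => simp
  | cons a s ih =>
    have ha : z - a ≠ 0 := h a (Multiset.mem_cons_self a _)
    have ih' := ih (fun r hr => h r (Multiset.mem_cons_of_mem hr))
    simp only [Multiset.map_cons, Multiset.prod_cons, Multiset.sum_cons, derivative_mul,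
      derivative_sub, derivative_X, derivative_C, sub_zero, one_mul, eval_add, eval_mul,
      eval_sub, eval_X, eval_C, ih']
    field_simp

lemma term_pos {z r : ℂ} (hz : ‖z‖ = 1) (hr : ‖r‖ < 1) :
    0 < (z * (z - r)⁻¹).re := by
  have hzr : z - r ≠ 0 := by
    intro h
    rw [sub_eq_zero] at h
    rw [h] at hz
    exact absurd hz (ne_of_lt hr)
  rw [Complex.inv_def, ← mul_assoc, mul_comm _ (((Complex.normSq (z - r))⁻¹ : ℝ) : ℂ),
    Complex.re_ofReal_mul]
  have h1 : 0 < (Complex.normSq (z - r))⁻¹ :=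
    inv_pos.mpr (Complex.normSq_pos.mpr hzr)
  have h2 : 0 < (z * (starRingEnd ℂ) (z - r)).re := by
    have : z * (starRingEnd ℂ) (z - r) = (Complex.normSq z : ℂ) - z * (starRingEnd ℂ) r := by
      rw [map_sub, mul_sub, Complex.mul_conj]
    rw [this]
    have hre : (z * (starRingEnd ℂ) r).re ≤ ‖r‖ := by
      calc (z * (starRingEnd ℂ) r).re ≤ ‖z * (starRingEnd ℂ) r‖ := Complex.re_le_norm _
        _ = ‖z‖ * ‖r‖ := by rw [norm_mul, Complex.norm_conj]
        _ = ‖r‖ := by rw [hz, one_mul]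
    have hnsq : Complex.normSq z = 1 := by
      rw [Complex.normSq_eq_norm_sq, hz, one_pow]
    simp only [Complex.sub_re, Complex.ofReal_re, hnsq]
    linarith
  positivity

lemma multiset_sum_pos : ∀ (s : Multiset ℝ), (∀ x ∈ s, 0 < x) → s ≠ 0 → 0 < s.sum := by
  intro s
  induction s using Multiset.induction with
  | empty => exact fun _ hs => absurd rfl hs
  | cons a s ih =>
    intro h _
    rw [Multiset.sum_cons]
    rcases eq_or_ne s 0 with rfl | hs0
    · simpa using h a (Multiset.mem_cons_self a _)
    · have hsum := ih (fun x hx => h x (Multiset.mem_cons_of_mem hx)) hs0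
      have ha := h a (Multiset.mem_cons_self a _)
      linarith

lemma maxMod_nonneg (p : Polynomial ℂ) : 0 ≤ maxMod p 1 :=
  le_trans (norm_nonneg _) (maxMod_ge p (z := 1) (by simp))

lemma key (p : Polynomial ℂ) {z : ℂ} (hz : ‖z‖ = 1) :
    ‖(derivative p).eval z‖ ≤ p.natDegree * maxMod p 1 := by
  set n := p.natDegree with hn
  set M := maxMod p 1 with hM
  have hM0 : 0 ≤ M := maxMod_nonneg p
  rcases Nat.eq_zero_or_pos n with h0 | hn1
  · -- constant polynomial
    have := Polynomial.eq_C_of_natDegree_eq_zero h0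
    rw [this]
    simpa using mul_nonneg (Nat.cast_nonneg n) hM0
  rcases eq_or_lt_of_le hM0 with hMz | hMpos
  · -- M = 0 : p vanishes on {|w| ≥ 1} hence p = 0
    have hp0 : p = 0 := by
      apply p.eq_zero_of_infinite_isRoot
      apply Set.infinite_of_injective_forall_mem
        (f := fun k : ℕ => ((k : ℂ) + 2))
      case hi =>
        intro a b hab
        simpa using hab
      case hf =>
        intro k
        have habs : (1 : ℝ) ≤ ‖(k : ℂ) + 2‖ := by
          have : ((k : ℂ) + 2) = (((k : ℝ) + 2 : ℝ) : ℂ) := by push_cast; ring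
          rw [this, Complex.norm_real, Real.norm_eq_abs, abs_of_nonneg (by positivity)]
          have : (0:ℝ) ≤ k := Nat.cast_nonneg k
          linarith
        have := growth p habs
        rw [← hM, ← hMz, zero_mul] at this
        have := le_antisymm this (norm_nonneg _)
        simpa [Polynomial.IsRoot] using (norm_eq_zero.mp this)
    rw [hp0]
    simpa using mul_nonneg (Nat.cast_nonneg n) hM0
  -- main case : n ≥ 1, M > 0
  by_contra hcon
  push_neg at hcon
  have hz0 : z ≠ 0 := by intro h; simp [h] at hz
  have hzn : z ^ (n - 1) ≠ 0 := pow_ne_zero _ hz0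
  have hdenom : ((n : ℂ) * (M : ℂ) * z ^ (n - 1)) ≠ 0 := by
    apply mul_ne_zero (mul_ne_zero _ _) hzn
    · exact Nat.cast_ne_zero.mpr hn1.ne'
    · exact_mod_cast Complex.ofReal_ne_zero.mpr (ne_of_gt hMpos)
  set lam : ℂ := (derivative p).eval z / ((n : ℂ) * (M : ℂ) * z ^ (n - 1)) with hlam
  have habs_lam : 1 < ‖lam‖ := by
    rw [hlam, norm_div, norm_mul, norm_mul, norm_pow, hz, one_pow, mul_one,
      Complex.norm_natCast, Complex.norm_real, Real.norm_eq_abs, abs_of_pos hMpos]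
    rw [lt_div_iff₀ (by positivity), one_mul]
    exact hcon
  set g : Polynomial ℂ := C ((M : ℂ) * lam) * X ^ n - p with hg
  have hlead : ‖p.coeff n‖ ≤ M := by
    have := lead_bound p
    rwa [Polynomial.leadingCoeff, ← hn, ← hM] at this
  have hcoeffn : g.coeff n = (M : ℂ) * lam - p.coeff n := by
    rw [hg, coeff_sub, coeff_C_mul, coeff_X_pow, if_pos rfl, mul_one]
  have hcoeffn_ne : g.coeff n ≠ 0 := by
    rw [hcoeffn, sub_ne_zero]
    intro h
    have habs2 : ‖(M:ℂ) * lam‖ = ‖p.coeff n‖ := by rw [h]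
    rw [norm_mul, Complex.norm_real, Real.norm_eq_abs, abs_of_pos hMpos] at habs2
    nlinarith
  have hgne : g ≠ 0 := fun h => hcoeffn_ne (by simp [h])
  have hdeg : 1 ≤ g.natDegree := le_trans hn1 (le_natDegree_of_ne_zero hcoeffn_ne)
  have hsplit : Splits g := IsAlgClosed.splits g
  have hcard : g.roots.card = g.natDegree := (splits_iff_card_roots).mp hsplit
  have hroots_lt : ∀ r ∈ g.roots, ‖r‖ < 1 := by
    intro r hr
    by_contra hge
    push_neg at hge
    have hroot : g.eval r = 0 := isRoot_of_mem_roots hr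
    have hpr : p.eval r = (M:ℂ) * lam * r ^ n := by
      have h1 : (M:ℂ) * lam * r ^ n - p.eval r = 0 := by
        simpa [hg] using hroot
      linear_combination -h1
    have h1 : ‖p.eval r‖ ≤ M * ‖r‖ ^ n := by
      have := growth p hge
      rwa [← hM, ← hn] at this
    have h2 : ‖p.eval r‖ = M * ‖lam‖ * ‖r‖ ^ n := by
      rw [hpr, norm_mul, norm_mul, norm_pow, Complex.norm_real, Real.norm_eq_abs, abs_of_pos hMpos]
    have h3 : (1:ℝ) ≤ ‖r‖ ^ n := one_le_pow₀ hge
    have ht : (0:ℝ) < ‖r‖ ^ n := lt_of_lt_of_le one_pos h3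
    nlinarith [mul_pos hMpos ht]
  have hzr_ne : ∀ r ∈ g.roots, z - r ≠ 0 := by
    intro r hr h
    rw [sub_eq_zero] at h
    rw [h] at hz
    exact absurd hz (ne_of_lt (hroots_lt r hr))
  have hfac := hsplit.eq_prod_roots
  have hgderiv : eval z (derivative g) = 0 := by
    have he : eval z (derivative g) =
        (M:ℂ) * lam * ((n:ℂ) * z ^ (n-1)) - eval z (derivative p) := by
      rw [hg, derivative_sub, derivative_C_mul, derivative_X_pow]
      simp [mul_assoc]
    rw [he, hlam]
    have hM' : (M:ℂ) ≠ 0 := Complex.ofReal_ne_zero.mpr (ne_of_gt hMpos)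
    have hn' : (n:ℂ) ≠ 0 := Nat.cast_ne_zero.mpr hn1.ne'
    field_simp
    ring
  have hlead_ne : g.leadingCoeff ≠ 0 := leadingCoeff_ne_zero.mpr hgne
  have hprod_ne : eval z ((g.roots.map (fun a => X - C a)).prod) ≠ 0 := by
    rw [eval_multiset_prod]
    apply Multiset.prod_ne_zero
    intro h0
    rw [Multiset.mem_map] at h0
    obtain ⟨q, hq, hq0⟩ := h0
    rw [Multiset.mem_map] at hq
    obtain ⟨r, hr, rfl⟩ := hq
    simp only [eval_sub, eval_X, eval_C] at hq0
    exact hzr_ne r hr hq0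
  have hS : (g.roots.map (fun a => (z - a)⁻¹)).sum = 0 := by
    have hd := deriv_prod_eval z g.roots hzr_ne
    have h2 : eval z (derivative g) =
        g.leadingCoeff * (eval z ((g.roots.map (fun a => X - C a)).prod) *
          (g.roots.map (fun a => (z - a)⁻¹)).sum) := by
      conv_lhs => rw [hfac]
      rw [derivative_C_mul, eval_mul, eval_C, hd]
    rw [hgderiv] at h2
    have := (mul_eq_zero.mp h2.symm).resolve_left hlead_ne
    exact (mul_eq_zero.mp this).resolve_left hprod_ne
  -- positivity contradiction
  have hre : ((g.roots.map (fun a => (z * (z - a)⁻¹).re)).sum : ℝ) = 0 := by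
    have h1 : (g.roots.map (fun a => z * (z - a)⁻¹)).sum = 0 := by
      rw [Multiset.sum_map_mul_left, hS, mul_zero]
    have h3 : (Complex.reAddGroupHom) (g.roots.map (fun a => z * (z - a)⁻¹)).sum
        = ((g.roots.map (fun a => z * (z - a)⁻¹)).map Complex.reAddGroupHom).sum :=
      map_multiset_sum _ _
    rw [h1, Multiset.map_map] at h3
    simpa using h3.symm
  have hpos : 0 < ((g.roots.map (fun a => (z * (z - a)⁻¹).re)).sum : ℝ) := by
    have hne : g.roots ≠ 0 := by
      intro h
      rw [h] at hcard
      simp at hcard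
      omega
    apply multiset_sum_pos
    · intro x hx
      rw [Multiset.mem_map] at hx
      obtain ⟨r, hr, rfl⟩ := hx
      exact term_pos hz (hroots_lt r hr)
    · simpa using hne
  exact absurd hre (ne_of_gt hpos)


theorem stmt0 (p : Polynomial ℂ) (n : ℕ) (hn : p.natDegree = n) :
    maxMod (derivative p) 1 ≤ n * maxMod p 1 := by
  subst hn
  exact maxMod_le _ (fun z hz => key p hz)
end

section
/- If p(z) is a complex polynomial of degree n having no zeros in the open unit disk |z| < 1, then max_{|z|=1} |p'(z)| ≤ (n/2) · max_{|z|=1} |p(z)|. -/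
open Polynomial

/-- Per-root bound: for `|z| = 1`, `|r| ≥ 1`, `z ≠ r`, we have `Re (z/(z-r)) ≤ 1/2`. -/
lemma ErdosLax.re_single {z r : ℂ} (hz : ‖z‖ = 1) (hr : 1 ≤ ‖r‖)
    (hne : z ≠ r) : (z * (z - r)⁻¹).re ≤ 1 / 2 := by
  have hd : z - r ≠ 0 := sub_ne_zero.mpr hne
  have hN : 0 < Complex.normSq (z - r) := Complex.normSq_pos.mpr hd
  have h1 : Complex.normSq z = 1 := by
    rw [Complex.normSq_eq_norm_sq, hz]; norm_num
  have h2 : 1 ≤ Complex.normSq r := by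
    rw [Complex.normSq_eq_norm_sq]; nlinarith
  rw [mul_comm, ← div_eq_inv_mul, Complex.div_re, ← add_div, div_le_iff₀ hN]
  simp only [Complex.normSq_apply, Complex.sub_re, Complex.sub_im] at *
  nlinarith

/-- Logarithmic derivative of a product of linear factors. -/
lemma ErdosLax.logderiv (s : Multiset ℂ) (z : ℂ) (h : ∀ r ∈ s, z ≠ r) :
    eval z (derivative (s.map fun r => X - C r).prod) /
      eval z (s.map fun r => X - C r).prod = (s.map fun r => (z - r)⁻¹).sum := by
  induction s using Multiset.induction with
  | empty => simp
  | cons r s ih =>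
    have hr : z - r ≠ 0 := sub_ne_zero.mpr (h r (Multiset.mem_cons_self r s))
    have hs : eval z (s.map fun r => X - C r).prod ≠ 0 := by
      rw [eval_multiset_prod]
      refine Multiset.prod_ne_zero ?_
      intro h0
      rw [Multiset.mem_map] at h0
      obtain ⟨q, hq, hq0⟩ := h0
      rw [Multiset.mem_map] at hq
      obtain ⟨a, ha, rfl⟩ := hq
      simp only [eval_sub, eval_X, eval_C] at hq0
      exact h a (Multiset.mem_cons_of_mem ha) (sub_eq_zero.mp hq0)
    have ih' := ih (fun a ha => h a (Multiset.mem_cons_of_mem ha))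
    rw [Multiset.map_cons, Multiset.prod_cons, Multiset.map_cons, Multiset.sum_cons,
      derivative_mul, ← ih']
    simp only [derivative_sub, derivative_X, derivative_C, sub_zero, eval_add, eval_mul,
      eval_sub, eval_X, eval_C, eval_one, one_mul]
    field_simp

/-- The key algebraic inequality: if `Re (w/a) ≤ n/2` then `|w| ≤ |n·a - w|`. -/
lemma ErdosLax.key {a w : ℂ} {n : ℝ} (hn : 0 ≤ n) (ha : a ≠ 0)
    (h : (w / a).re ≤ n / 2) : ‖w‖ ≤ ‖(n : ℂ) * a - w‖ := by
  have hN : 0 < Complex.normSq a := Complex.normSq_pos.mpr ha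
  rw [Complex.div_re, ← add_div, div_le_iff₀ hN] at h
  have hgoal : Complex.normSq w ≤ Complex.normSq ((n : ℂ) * a - w) := by
    simp only [Complex.normSq_apply, Complex.sub_re, Complex.sub_im, Complex.mul_re,
      Complex.mul_im, Complex.ofReal_re, Complex.ofReal_im] at *
    nlinarith [mul_le_mul_of_nonneg_left h hn]
  rw [Complex.norm_def, Complex.norm_def]
  exact Real.sqrt_le_sqrt hgoal

/-- Laguerre-type inequality: if all roots of `p` lie outside the open unit disk, then
on the unit circle `|p'(z)| ≤ |n·p(z) - z·p'(z)|`. -/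
lemma ErdosLax.laguerre (p : ℂ[X]) (hp : p ≠ 0)
    (hz : ∀ r : ℂ, p.IsRoot r → 1 ≤ ‖r‖) (z : ℂ) (h1 : ‖z‖ = 1) :
    ‖eval z (derivative p)‖ ≤
      ‖(p.natDegree : ℂ) * eval z p - z * eval z (derivative p)‖ := by
  by_cases hpz : eval z p = 0
  · rw [hpz, mul_zero, zero_sub, norm_neg, norm_mul, h1, one_mul]
  · -- all roots distinct from z
    have hzr : ∀ r ∈ p.roots, z ≠ r := by
      intro r hr hzr
      exact hpz (hzr ▸ (isRoot_of_mem_roots hr))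
    have hfact := (IsAlgClosed.splits p).eq_prod_roots.symm
    have hcard : p.roots.card = p.natDegree :=
      (Polynomial.splits_iff_card_roots).mp (IsAlgClosed.splits p)
    have hc : p.leadingCoeff ≠ 0 := leadingCoeff_ne_zero.mpr hp
    -- logarithmic derivative
    have hld : eval z (derivative p) / eval z p = (p.roots.map fun r => (z - r)⁻¹).sum := by
      conv_lhs => rw [← hfact]
      rw [derivative_mul, derivative_C, zero_mul, zero_add, eval_mul, eval_mul, eval_C,
        mul_div_mul_left _ _ hc]
      exact ErdosLax.logderiv p.roots z hzr
    -- real part bound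
    have hre : (z * (eval z (derivative p) / eval z p)).re ≤ (p.natDegree : ℝ) / 2 := by
      rw [hld, ← Multiset.sum_map_mul_left]
      have hmap : (Multiset.map (fun r => z * (z - r)⁻¹) p.roots).sum.re
          = (Multiset.map (fun r => (z * (z - r)⁻¹).re) p.roots).sum := by
        rw [show (Multiset.map (fun r => z * (z - r)⁻¹) p.roots).sum.re
            = Complex.reAddGroupHom (Multiset.map (fun r => z * (z - r)⁻¹) p.roots).sum from rfl,
          map_multiset_sum, Multiset.map_map]
        rfl
      rw [hmap, ← hcard]
      have hb : (Multiset.map (fun r => (z * (z - r)⁻¹).re) p.roots).sum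
          ≤ (Multiset.card (Multiset.map (fun r => (z * (z - r)⁻¹).re) p.roots)) • (1/2 : ℝ) := by
        refine Multiset.sum_le_card_nsmul _ _ ?_
        intro x hx
        rw [Multiset.mem_map] at hx
        obtain ⟨r, hr, rfl⟩ := hx
        exact ErdosLax.re_single h1 (hz r (isRoot_of_mem_roots hr)) (hzr r hr)
      rw [Multiset.card_map] at hb
      refine hb.trans ?_
      rw [nsmul_eq_mul]
      ring_nf
      rfl
    rw [mul_div_assoc'] at hre
    have hkey := ErdosLax.key (a := eval z p) (w := z * eval z (derivative p))
      (n := (p.natDegree : ℝ)) (Nat.cast_nonneg _) hpz (by exact_mod_cast hre)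
    rw [norm_mul, h1, one_mul] at hkey
    refine hkey.trans (le_of_eq ?_)
    norm_num

/-- Maximum modulus: a bound on the unit circle extends to the closed disk. -/
lemma ErdosLax.maxmod (p : ℂ[X]) {M : ℝ}
    (hM : ∀ z : ℂ, ‖z‖ = 1 → ‖eval z p‖ ≤ M) :
    ∀ w : ℂ, ‖w‖ ≤ 1 → ‖eval w p‖ ≤ M := by
  intro w hw
  have := Complex.norm_le_of_forall_mem_frontier_norm_le (U := Metric.ball (0:ℂ) 1)
    Metric.isBounded_ball (f := fun z => eval z p)
    p.differentiable.diffContOnCl (C := M) ?_ (z := w) ?_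
  · exact this
  · intro z hzf
    rw [frontier_ball (0:ℂ) one_ne_zero, mem_sphere_zero_iff_norm] at hzf
    exact hM z hzf
  · rw [closure_ball (0:ℂ) one_ne_zero, Metric.mem_closedBall, dist_zero_right]
    exact hw

lemma ErdosLax.scale_abs (D : ℂ) (hD : D ≠ 0) (n c : ℝ) :
    ‖D - (n : ℂ) * (((c / ‖D‖ : ℝ) : ℂ) * D)‖
      = |‖D‖ - n * c| := by
  have hDpos : 0 < ‖D‖ := norm_pos_iff.mpr hD
  have hC : ((‖D‖ : ℝ) : ℂ) ≠ 0 := by exact_mod_cast hDpos.ne'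
  have h' : D - (n : ℂ) * (((c / ‖D‖ : ℝ) : ℂ) * D)
      = (((‖D‖ - n * c) / ‖D‖ : ℝ) : ℂ) * D := by
    push_cast
    field_simp
  rw [h', norm_mul, Complex.norm_real, Real.norm_eq_abs, abs_div, abs_of_pos hDpos, div_mul_cancel₀]
  exact hDpos.ne'

lemma ErdosLax.scale_mod (D : ℂ) (hD : D ≠ 0) {c : ℝ} (hc : 0 < c) :
    ‖((c / ‖D‖ : ℝ) : ℂ) * D‖ = c := by
  have hDpos : 0 < ‖D‖ := norm_pos_iff.mpr hD
  rw [norm_mul, Complex.norm_real, Real.norm_eq_abs, abs_div, abs_of_pos hDpos, abs_of_pos hc,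
    div_mul_cancel₀]
  exact hDpos.ne'

/-- Pointwise Erdős–Lax bound on the unit circle. -/
lemma ErdosLax.pointwise (p : ℂ[X]) (n : ℕ) (hn : p.natDegree = n) (hn1 : 1 ≤ n)
    (hz : ∀ r : ℂ, p.IsRoot r → 1 ≤ ‖r‖) {M : ℝ}
    (hM : ∀ w : ℂ, ‖w‖ ≤ 1 → ‖eval w p‖ ≤ M)
    (z : ℂ) (h1 : ‖z‖ = 1) :
    2 * ‖eval z (derivative p)‖ ≤ n * M := by
  have hM0 : 0 ≤ M := le_trans (norm_nonneg _) (hM 0 (by simp))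
  have hp0 : p ≠ 0 := fun h => by simp [h] at hn; omega
  set D : ℂ := (n : ℂ) * eval z p - z * eval z (derivative p) with hD
  have hA : ‖eval z (derivative p)‖ ≤ ‖D‖ := by
    rw [hD, ← hn]; exact ErdosLax.laguerre p hp0 hz z h1
  have hkey : ∀ l : ℂ, M < ‖l‖ →
      ‖eval z (derivative p)‖ ≤ ‖D - (n : ℂ) * l‖ := by
    intro l hl
    set q : ℂ[X] := p - C l with hq
    have hqdeg : q.natDegree = n := by rw [hq, natDegree_sub_C, hn]
    have hq0 : q ≠ 0 := fun h => by simp [h] at hqdeg; omega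
    have hqz : ∀ r : ℂ, q.IsRoot r → 1 ≤ ‖r‖ := by
      intro r hr
      by_contra hlt
      push_neg at hlt
      have hev : eval r p = l := by
        have := hr
        simp only [hq, IsRoot, eval_sub, eval_C, sub_eq_zero] at this
        exact this
      have := hM r hlt.le
      rw [hev] at this
      exact absurd hl (not_lt.mpr this)
    have hlag := ErdosLax.laguerre q hq0 hqz z h1
    rw [hqdeg] at hlag
    have hdq : derivative q = derivative p := by simp [hq]
    rw [hdq] at hlag
    have heq : (n : ℂ) * eval z q - z * eval z (derivative p) = D - (n : ℂ) * l := by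
      simp only [hq, eval_sub, eval_C, hD]; ring
    rwa [heq] at hlag
  by_cases hD0 : D = 0
  · have h0 : ‖eval z (derivative p)‖ = 0 :=
      le_antisymm (by simpa [hD0] using hA) (norm_nonneg _)
    rw [h0, mul_zero]
    positivity
  · have hDpos : 0 < ‖D‖ := norm_pos_iff.mpr hD0
    have hnpos : (0:ℝ) < n := by exact_mod_cast hn1
    by_cases hDM : ‖D‖ ≤ n * M
    · -- main case
      have hstep : ∀ ε : ℝ, 0 < ε →
          2 * ‖eval z (derivative p)‖ ≤ n * M + n * ε := by
        intro ε hε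
        have hc : 0 < M + ε := by linarith
        have hk := hkey ((((M + ε) / ‖D‖ : ℝ) : ℂ) * D)
          (by rw [ErdosLax.scale_mod D hD0 hc]; linarith)
        rw [show ((n:ℕ):ℂ) = (((n:ℕ):ℝ):ℂ) by push_cast; rfl,
          ErdosLax.scale_abs D hD0] at hk
        have habs2 : |‖D‖ - n * (M + ε)| = n * (M + ε) - ‖D‖ := by
          rw [abs_of_nonpos (by nlinarith)]; ring
        rw [habs2] at hk
        nlinarith
      refine le_of_forall_pos_le_add ?_
      intro ε hε
      have := hstep (ε / n) (by positivity)
      rw [mul_div_cancel₀ _ hnpos.ne'] at this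
      exact this
    · -- |D| > n M : choose λ of modulus |D|/n > M
      push_neg at hDM
      have hc : 0 < ‖D‖ / n := by positivity
      have hk := hkey (((‖D‖ / n / ‖D‖ : ℝ) : ℂ) * D)
        (by rw [ErdosLax.scale_mod D hD0 hc, lt_div_iff₀ hnpos]; linarith)
      rw [show ((n:ℕ):ℂ) = (((n:ℕ):ℝ):ℂ) by push_cast; rfl,
        ErdosLax.scale_abs D hD0] at hk
      have : ‖D‖ - n * (‖D‖ / n) = 0 := by
        field_simp
        ring
      rw [this, abs_zero] at hk
      have h0 : ‖eval z (derivative p)‖ = 0 :=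
        le_antisymm hk (norm_nonneg _)
      rw [h0, mul_zero]
      positivity

theorem stmt1 (p : Polynomial ℂ) (n : ℕ) (hn : p.natDegree = n)
    (hz : ∀ z : ℂ, p.IsRoot z → 1 ≤ ‖z‖) :
    maxMod (derivative p) 1 ≤ (n / 2 : ℝ) * maxMod p 1 := by
  have hne : ({z : ℂ | ‖z‖ = 1} : Set ℂ).Nonempty := ⟨1, by simp⟩
  rcases Nat.eq_zero_or_pos n with h0 | h1
  · subst h0
    have hpc : derivative p = 0 := by
      rw [p.eq_C_of_natDegree_eq_zero hn, derivative_C]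
    have himg : ((fun z : ℂ => ‖eval z (0:Polynomial ℂ)‖) ''
        {z : ℂ | ‖z‖ = 1}) = {0} := by
      rw [show (fun z : ℂ => ‖eval z (0:Polynomial ℂ)‖) = fun _ => (0:ℝ) by
        funext; simp]
      exact Set.Nonempty.image_const hne 0
    rw [hpc]
    unfold maxMod
    rw [himg, csSup_singleton]
    simp
  · have hp0 : p ≠ 0 := by
      intro h
      have := hz 0 (by simp [h])
      norm_num at this
    have hsph : {z : ℂ | ‖z‖ = 1} = Metric.sphere (0:ℂ) 1 := by
      ext w; simp [Complex.dist_eq]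
    have hcont : Continuous fun z : ℂ => ‖eval z p‖ :=
      continuous_norm.comp p.continuous
    have hMub : ∀ w : ℂ, ‖w‖ = 1 → ‖eval w p‖ ≤ maxMod p 1 := by
      intro w hw
      apply le_csSup
      · rw [hsph]
        exact ((isCompact_sphere (0:ℂ) 1).image hcont).bddAbove
      · exact ⟨w, hw, rfl⟩
    have hMd := ErdosLax.maxmod p hMub
    have hpt : ∀ w : ℂ, ‖w‖ = 1 →
        ‖eval w (derivative p)‖ ≤ (n / 2 : ℝ) * maxMod p 1 := by
      intro w hw
      have := ErdosLax.pointwise p n hn h1 hz hMd w hw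
      linarith
    unfold maxMod
    refine csSup_le ⟨_, ⟨1, by simp, rfl⟩⟩ ?_
    rintro x ⟨w, hw, rfl⟩
    exact hpt w hw
end

section
/- If p(z) is a complex polynomial of degree n with all its zeros in the open unit disk |z| < 1, then max_{|z|=1} |p'(z)| ≥ (n/2) · max_{|z|=1} |p(z)|. -/
open Polynomial

lemma key_re (z r : ℂ) (h1 : ‖z‖ = 1) (hr : ‖r‖ < 1) :
    (1 / 2 : ℝ) * Complex.normSq (z - r) ≤ (z * (starRingEnd ℂ) (z - r)).re := by
  have hz2 : Complex.normSq z = 1 := by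
    rw [Complex.normSq_eq_norm_sq, h1]; norm_num
  have hr2 : Complex.normSq r ≤ 1 := by
    rw [Complex.normSq_eq_norm_sq]
    nlinarith [norm_nonneg r]
  have e1 : Complex.normSq (z - r) =
      Complex.normSq z - 2 * (z * (starRingEnd ℂ) r).re + Complex.normSq r := by
    simp only [Complex.normSq_sub]
    ring
  have e2 : (z * (starRingEnd ℂ) (z - r)).re =
      Complex.normSq z - (z * (starRingEnd ℂ) r).re := by
    rw [map_sub, mul_sub]
    simp [Complex.mul_conj]
  rw [e1, e2, hz2]
  linarith

lemma sum_re_ge (z : ℂ) (h1 : ‖z‖ = 1) (s : Multiset ℂ)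
    (hs : ∀ r ∈ s, ‖r‖ < 1) :
    (s.card : ℝ) * ((1 / 2 : ℝ) * Complex.normSq ((s.map (fun r => z - r)).prod)) ≤
      ((starRingEnd ℂ) ((s.map (fun r => z - r)).prod) *
        (z * (s.map (fun r => (((s.erase r).map (fun r' => z - r')).prod))).sum)).re := by
  classical
  set P : ℂ := (s.map (fun r => z - r)).prod with hP
  have hterm : ∀ r ∈ s,
      (1 / 2 : ℝ) * Complex.normSq P ≤
        ((starRingEnd ℂ) P * (z * (((s.erase r).map (fun r' => z - r')).prod))).re := by
    intro r hrs
    set T : ℂ := ((s.erase r).map (fun r' => z - r')).prod with hT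
    have hPfac : P = (z - r) * T := by
      rw [hP, hT]
      conv_lhs => rw [← Multiset.cons_erase hrs]
      rw [Multiset.map_cons, Multiset.prod_cons]
    have hTT : (starRingEnd ℂ) T * T = (Complex.normSq T : ℂ) := by
      rw [mul_comm]; exact Complex.mul_conj T
    have : (starRingEnd ℂ) P * (z * T) =
        (z * (starRingEnd ℂ) (z - r)) * (Complex.normSq T : ℂ) := by
      rw [hPfac, map_mul, ← hTT]; ring
    rw [this]
    have hre : ((z * (starRingEnd ℂ) (z - r)) * (Complex.normSq T : ℂ)).re =
        (z * (starRingEnd ℂ) (z - r)).re * Complex.normSq T := by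
      rw [Complex.mul_re]
      simp
    rw [hre, hPfac, Complex.normSq_mul]
    have h2 := key_re z r h1 (hs r hrs)
    nlinarith [Complex.normSq_nonneg T, Complex.normSq_nonneg (z - r)]
  -- turn the RHS into a sum of real parts
  have hsum : (starRingEnd ℂ) P *
      (z * (s.map (fun r => (((s.erase r).map (fun r' => z - r')).prod))).sum) =
      (s.map (fun r => (starRingEnd ℂ) P *
        (z * (((s.erase r).map (fun r' => z - r')).prod)))).sum := by
    rw [Multiset.sum_map_mul_left, Multiset.sum_map_mul_left]
  rw [hsum]
  have hre_sum : ((s.map (fun r => (starRingEnd ℂ) P *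
      (z * (((s.erase r).map (fun r' => z - r')).prod)))).sum).re =
      (s.map (fun r => ((starRingEnd ℂ) P *
        (z * (((s.erase r).map (fun r' => z - r')).prod))).re)).sum := by
    have hgen : ∀ m : Multiset ℂ, m.sum.re = (m.map Complex.re).sum := by
      intro m
      induction m using Multiset.induction with
      | empty => simp
      | cons a t ih => simp [ih]
    rw [hgen, Multiset.map_map]
    rfl
  rw [hre_sum]
  have := Multiset.card_nsmul_le_sum (s := s.map (fun r => ((starRingEnd ℂ) P *
      (z * (((s.erase r).map (fun r' => z - r')).prod))).re))
      (a := (1 / 2 : ℝ) * Complex.normSq P) (by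
        intro x hx
        obtain ⟨r, hrs, rfl⟩ := Multiset.mem_map.mp hx
        exact hterm r hrs)
  rw [Multiset.card_map] at this
  calc (s.card : ℝ) * ((1 / 2 : ℝ) * Complex.normSq P)
      = s.card • ((1 / 2 : ℝ) * Complex.normSq P) := by rw [nsmul_eq_mul]
    _ ≤ _ := this

lemma pointwise (p : Polynomial ℂ)
    (hz : ∀ z : ℂ, p.IsRoot z → ‖z‖ < 1)
    (z : ℂ) (h1 : ‖z‖ = 1) :
    ((p.natDegree : ℝ) / 2) * ‖p.eval z‖ ≤
      ‖(derivative p).eval z‖ := by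
  classical
  by_cases hp0 : p = 0
  · simp [hp0]
  by_cases hpz : p.eval z = 0
  · simp [hpz]
  set s : Multiset ℂ := p.roots with hs
  have hcard : Multiset.card s = p.natDegree :=
    (Polynomial.splits_iff_card_roots).mp (IsAlgClosed.splits p)
  have hroots : ∀ r ∈ s, ‖r‖ < 1 := by
    intro r hr
    exact hz r ((Polynomial.mem_roots hp0).mp hr)
  have hp : C p.leadingCoeff * (s.map fun r => X - C r).prod = p :=
    Polynomial.C_leadingCoeff_mul_prod_multiset_X_sub_C hcard
  set a : ℂ := p.leadingCoeff with ha
  -- evaluate p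
  have hPeval : p.eval z = a * (s.map (fun r => z - r)).prod := by
    rw [← hp]
    simp [Polynomial.eval_multiset_prod, Multiset.map_map, Function.comp]
  -- evaluate derivative p
  have hDeval : (derivative p).eval z =
      a * (s.map (fun r => (((s.erase r).map (fun r' => z - r')).prod))).sum := by
    rw [← hp, derivative_mul, derivative_C, zero_mul, zero_add, Polynomial.derivative_prod]
    rw [eval_mul, eval_C]
    congr 1
    have hevs : ∀ (m : Multiset ℂ[X]), eval z m.sum = (m.map (eval z)).sum := fun m =>
      map_multiset_sum (Polynomial.evalRingHom z) m
    rw [hevs, Multiset.map_map]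
    congr 1
    apply Multiset.map_congr rfl
    intro r hr
    simp [Polynomial.eval_multiset_prod, Multiset.map_map, Function.comp]
  -- the main real-part estimate
  have hmain := sum_re_ge z h1 s hroots
  set Pr : ℂ := (s.map (fun r => z - r)).prod with hPr
  set Sm : ℂ := (s.map (fun r => (((s.erase r).map (fun r' => z - r')).prod))).sum with hSm
  -- |eval| facts
  have habs : ‖p.eval z‖ * ‖(derivative p).eval z‖ ≥
      ((p.natDegree : ℝ) / 2) * ‖p.eval z‖ ^ 2 := by
    have hcalc : ((starRingEnd ℂ) (p.eval z) * (z * (derivative p).eval z)).re =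
        Complex.normSq a * ((starRingEnd ℂ) Pr * (z * Sm)).re := by
      rw [hPeval, hDeval]
      have : (starRingEnd ℂ) (a * Pr) * (z * (a * Sm)) =
          (Complex.normSq a : ℂ) * ((starRingEnd ℂ) Pr * (z * Sm)) := by
        rw [map_mul, ← Complex.mul_conj]
        ring
      rw [this, Complex.mul_re]
      simp
    have hle1 : ((p.natDegree : ℝ) / 2) * ‖p.eval z‖ ^ 2 ≤
        ((starRingEnd ℂ) (p.eval z) * (z * (derivative p).eval z)).re := by
      rw [hcalc]
      have h2 : ‖p.eval z‖ ^ 2 = Complex.normSq a * Complex.normSq Pr := by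
        rw [Complex.sq_norm, hPeval, Complex.normSq_mul]
      rw [h2, ← hcard]
      calc ((Multiset.card s : ℝ) / 2) * (Complex.normSq a * Complex.normSq Pr)
          = Complex.normSq a * ((Multiset.card s : ℝ) *
            ((1 / 2 : ℝ) * Complex.normSq Pr)) := by ring
        _ ≤ Complex.normSq a * ((starRingEnd ℂ) Pr * (z * Sm)).re :=
            mul_le_mul_of_nonneg_left hmain (Complex.normSq_nonneg a)
    have hle2 : ((starRingEnd ℂ) (p.eval z) * (z * (derivative p).eval z)).re ≤
        ‖p.eval z‖ * ‖(derivative p).eval z‖ := by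
      calc ((starRingEnd ℂ) (p.eval z) * (z * (derivative p).eval z)).re
          ≤ ‖(starRingEnd ℂ) (p.eval z) * (z * (derivative p).eval z)‖ :=
            Complex.re_le_norm _
        _ = ‖p.eval z‖ * ‖(derivative p).eval z‖ := by
            rw [norm_mul, norm_mul, Complex.norm_conj, h1]; ring
    linarith
  have hpos : 0 < ‖p.eval z‖ := norm_pos_iff.mpr hpz
  nlinarith [habs, hpos]

lemma sphere_eq : {z : ℂ | ‖z‖ = 1} = Metric.sphere (0 : ℂ) 1 := by
  ext w
  simp [Complex.dist_eq]

theorem stmt2 (p : Polynomial ℂ) (n : ℕ) (hn : p.natDegree = n)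
    (hz : ∀ z : ℂ, p.IsRoot z → ‖z‖ < 1) :
    (n / 2 : ℝ) * maxMod p 1 ≤ maxMod (derivative p) 1 := by
  have hK : IsCompact {z : ℂ | ‖z‖ = 1} := by
    rw [sphere_eq]; exact isCompact_sphere 0 1
  have hne : ({z : ℂ | ‖z‖ = 1} : Set ℂ).Nonempty :=
    ⟨1, by simp⟩
  have hcont : Continuous fun w : ℂ => ‖p.eval w‖ :=
    continuous_norm.comp p.continuous
  have hcont' : Continuous fun w : ℂ => ‖(derivative p).eval w‖ :=
    continuous_norm.comp (derivative p).continuous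
  obtain ⟨z0, hz0, hmax⟩ := hK.exists_isMaxOn hne hcont.continuousOn
  have hbdd' : BddAbove ((fun w => ‖(derivative p).eval w‖) ''
      {z : ℂ | ‖z‖ = 1}) :=
    (hK.image hcont').bddAbove
  have h1 : maxMod p 1 = ‖p.eval z0‖ := by
    apply le_antisymm
    · apply csSup_le (hne.image _)
      rintro x ⟨w, hw, rfl⟩
      exact hmax hw
    · exact le_csSup ((hK.image hcont).bddAbove) ⟨z0, hz0, rfl⟩
  have h2 : ‖(derivative p).eval z0‖ ≤ maxMod (derivative p) 1 :=
    le_csSup hbdd' ⟨z0, hz0, rfl⟩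
  have h3 := pointwise p hz z0 hz0
  rw [hn] at h3
  rw [h1]
  calc (n / 2 : ℝ) * ‖p.eval z0‖
      ≤ ‖(derivative p).eval z0‖ := h3
    _ ≤ maxMod (derivative p) 1 := h2
end

section
/- If p(z) is a complex polynomial of degree n with all its zeros in |z| < k where k ≤ 1, then max_{|z|=1} |p'(z)| ≥ (n/(1+k)) · max_{|z|=1} |p(z)|. -/
open Polynomial

lemma factA (k : ℝ) (hk : k ≤ 1) (z r : ℂ) (hz : ‖z‖ = 1)
    (hr : ‖r‖ < k) : 1 / (1 + k) ≤ (z / (z - r)).re := by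
  have hk0 : 0 < k := lt_of_le_of_lt (norm_nonneg r) hr
  have hzr : z ≠ r := by
    intro h
    rw [h] at hz
    linarith [lt_of_lt_of_le hr hk]
  have hw : z - r ≠ 0 := sub_ne_zero.mpr hzr
  have hD : 0 < Complex.normSq (z - r) := Complex.normSq_pos.mpr hw
  set a : ℝ := ‖r‖ with ha
  set t : ℝ := z.re * r.re + z.im * r.im with htdef
  have ht : |t| ≤ a := by
    have h1 : (z * (starRingEnd ℂ) r).re = t := by
      simp [Complex.mul_re, Complex.conj_re, Complex.conj_im, htdef]
    calc |t| = |(z * (starRingEnd ℂ) r).re| := by rw [h1]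
    _ ≤ ‖z * (starRingEnd ℂ) r‖ := Complex.abs_re_le_norm _
    _ = a := by rw [norm_mul, Complex.norm_conj, hz, one_mul]
  have hnz' : z.re * z.re + z.im * z.im = 1 := by
    have h2 : Complex.normSq z = 1 := by rw [← Complex.sq_norm, hz]; norm_num
    simpa [Complex.normSq_apply] using h2
  have hnr' : r.re * r.re + r.im * r.im = a ^ 2 := by
    have h2 : Complex.normSq r = a ^ 2 := by rw [← Complex.sq_norm]
    simpa [Complex.normSq_apply] using h2
  have hDval : Complex.normSq (z - r) = 1 - 2 * t + a ^ 2 := by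
    simp only [Complex.normSq_apply, Complex.sub_re, Complex.sub_im]
    nlinarith [hnz', hnr']
  have hre : (z / (z - r)).re = (1 - t) / (1 - 2 * t + a ^ 2) := by
    rw [Complex.div_re, hDval, ← add_div]
    congr 1
    simp only [Complex.sub_re, Complex.sub_im]
    nlinarith [hnz']
  rw [hre]
  rw [hDval] at hD
  rw [div_le_div_iff₀ (by linarith) hD]
  have ht1 : -a ≤ t := by
    cases abs_le.mp ht
    linarith
  have ha0 : 0 ≤ a := norm_nonneg r
  nlinarith [mul_pos (by linarith : (0:ℝ) < 1 + a) (by linarith : (0:ℝ) < k - a),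
    mul_nonneg (by linarith : (0:ℝ) ≤ t + a) (by linarith : (0:ℝ) ≤ 1 - k)]

lemma keyM (k : ℝ) (hk : k ≤ 1) (z : ℂ) (hz : ‖z‖ = 1)
    (M : Multiset ℂ) (hM : ∀ r ∈ M, ‖r‖ < k) :
    (Multiset.card M : ℝ) / (1 + k) ≤
      (z * eval z (derivative (M.map (fun r => X - C r)).prod) /
        eval z ((M.map (fun r => X - C r)).prod)).re := by
  induction M using Multiset.induction_on with
  | empty => simp
  | cons r M ih =>
    have hr : ‖r‖ < k := hM r (Multiset.mem_cons_self r M)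
    have hM' : ∀ s ∈ M, ‖s‖ < k := fun s hs => hM s (Multiset.mem_cons_of_mem hs)
    have ih' := ih hM'
    set P : Polynomial ℂ := (M.map (fun r => X - C r)).prod with hP
    have hPz : eval z P ≠ 0 := by
      rw [hP, eval_multiset_prod]
      apply Multiset.prod_ne_zero
      simp only [Multiset.map_map, Multiset.mem_map, Function.comp]
      rintro ⟨s, hs, hsz⟩
      have hzs : z = s := sub_eq_zero.mp (by simpa using hsz)
      rw [hzs] at hz
      linarith [lt_of_lt_of_le (hM' s hs) hk]
    have hw : z - r ≠ 0 := by
      intro h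
      rw [sub_eq_zero.mp h] at hz
      linarith [lt_of_lt_of_le hr hk]
    have hprod : ((r ::ₘ M).map (fun r => X - C r)).prod = (X - C r) * P := by
      rw [Multiset.map_cons, Multiset.prod_cons]
    have hder : derivative ((X - C r) * P) = P + (X - C r) * derivative P := by
      rw [derivative_mul]
      simp
    rw [hprod, hder]
    have heq : z * eval z (P + (X - C r) * derivative P) / eval z ((X - C r) * P)
        = z / (z - r) + z * eval z (derivative P) / eval z P := by
      simp only [eval_add, eval_mul, eval_sub, eval_X, eval_C]
      field_simp
    rw [heq, Complex.add_re]
    have hcard : (Multiset.card (r ::ₘ M) : ℝ) / (1 + k)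
        = 1 / (1 + k) + (Multiset.card M : ℝ) / (1 + k) := by
      rw [Multiset.card_cons]
      push_cast
      ring
    rw [hcard]
    exact add_le_add (factA k hk z r hz hr) ih'

lemma pointwise_bound (p : Polynomial ℂ) (hp : p ≠ 0) (k : ℝ) (hk : k ≤ 1)
    (hroots : ∀ w : ℂ, p.IsRoot w → ‖w‖ < k)
    (z : ℂ) (hz : ‖z‖ = 1) :
    ((p.natDegree : ℝ) / (1 + k)) * ‖eval z p‖
      ≤ ‖eval z (derivative p)‖ := by
  have hsplits : p.Splits := IsAlgClosed.splits p
  have he := hsplits.eq_prod_roots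
  set Q : Polynomial ℂ := (p.roots.map fun a => X - C a).prod with hQ
  have hcard : (Multiset.card p.roots : ℝ) = (p.natDegree : ℝ) := by
    have h := hsplits.natDegree_eq_card_roots
    exact_mod_cast h.symm
  have hMroots : ∀ r ∈ p.roots, ‖r‖ < k :=
    fun r hr => hroots r (isRoot_of_mem_roots hr)
  have key := keyM k hk z hz p.roots hMroots
  rw [hcard] at key
  have hpz : eval z p ≠ 0 := by
    intro h
    have := hroots z h
    linarith [lt_of_lt_of_le this hk]
  have ha : p.leadingCoeff ≠ 0 := leadingCoeff_ne_zero.mpr hp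
  have hQz : eval z Q ≠ 0 := by
    intro h
    apply hpz
    rw [he, eval_mul, h, mul_zero]
  have hratio : z * eval z (derivative p) / eval z p
      = z * eval z (derivative Q) / eval z Q := by
    conv_lhs => rw [he]
    rw [derivative_C_mul, eval_mul, eval_mul, eval_C]
    field_simp
  rw [← hQ, ← hratio] at key
  have h1 : (p.natDegree : ℝ) / (1 + k)
      ≤ ‖eval z (derivative p)‖ / ‖eval z p‖ := by
    calc (p.natDegree : ℝ) / (1 + k)
        ≤ (z * eval z (derivative p) / eval z p).re := key
    _ ≤ ‖z * eval z (derivative p) / eval z p‖ := Complex.re_le_norm _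
    _ = ‖eval z (derivative p)‖ / ‖eval z p‖ := by
        rw [norm_div, norm_mul, hz, one_mul]
  have hposp : 0 < ‖eval z p‖ := norm_pos_iff.mpr hpz
  calc ((p.natDegree : ℝ) / (1 + k)) * ‖eval z p‖
      ≤ (‖eval z (derivative p)‖ / ‖eval z p‖)
        * ‖eval z p‖ := by
        exact mul_le_mul_of_nonneg_right h1 (le_of_lt hposp)
  _ = ‖eval z (derivative p)‖ := by field_simp

theorem stmt3 (p : Polynomial ℂ) (n : ℕ) (hn : p.natDegree = n) (k : ℝ)
    (hk0 : 0 < k) (hk : k ≤ 1)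
    (hz : ∀ z : ℂ, p.IsRoot z → ‖z‖ < k) :
    (n / (1 + k)) * maxMod p 1 ≤ maxMod (derivative p) 1 := by
  have hp : p ≠ 0 := by
    intro h
    have hroot : p.IsRoot (k : ℂ) := by simp [h]
    have := hz _ hroot
    rw [Complex.norm_real, Real.norm_eq_abs, abs_of_pos hk0] at this
    exact lt_irrefl _ this
  set S : Set ℂ := {z : ℂ | ‖z‖ = 1} with hSdef
  have hSsphere : S = Metric.sphere (0 : ℂ) 1 := by
    ext w
    simp [hSdef, Metric.mem_sphere, Complex.dist_eq]
  have hcomp : IsCompact S := by rw [hSsphere]; exact isCompact_sphere 0 1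
  have hne : S.Nonempty := ⟨1, by simp [hSdef]⟩
  have hcont : Continuous fun w : ℂ => ‖eval w p‖ :=
    continuous_norm.comp (Polynomial.continuous p)
  have hcont' : Continuous fun w : ℂ => ‖eval w (derivative p)‖ :=
    continuous_norm.comp (Polynomial.continuous (derivative p))
  obtain ⟨z₀, hz₀S, hmax⟩ := hcomp.exists_isMaxOn hne hcont.continuousOn
  have hgreat : IsGreatest ((fun w => ‖eval w p‖) '' S)
      (‖eval z₀ p‖) := by
    constructor
    · exact Set.mem_image_of_mem _ hz₀S
    · rintro x ⟨w, hw, rfl⟩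
      exact hmax hw
  have hmaxp : maxMod p 1 = ‖eval z₀ p‖ := hgreat.csSup_eq
  have hbdd : BddAbove ((fun w => ‖eval w (derivative p)‖) '' S) :=
    (hcomp.image hcont').bddAbove
  have h2 : ‖eval z₀ (derivative p)‖ ≤ maxMod (derivative p) 1 :=
    le_csSup hbdd (Set.mem_image_of_mem _ hz₀S)
  have hz₀ : ‖z₀‖ = 1 := hz₀S
  calc ((n : ℝ) / (1 + k)) * maxMod p 1
      = ((p.natDegree : ℝ) / (1 + k)) * ‖eval z₀ p‖ := by rw [hmaxp, hn]
  _ ≤ ‖eval z₀ (derivative p)‖ := pointwise_bound p hp k hk hz z₀ hz₀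
  _ ≤ maxMod (derivative p) 1 := h2
end
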